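/- Let r ≥ 1 and let L : B_r → ℝ be a linear functional on the space B_r of real polynomials in θ₁,…,θ₅ of total degree at most r such that for every g ∈ B_r and every c ∈ ℝ with g − c ∈ B_r⁺, one has L(g) ≥ c. Define P : (Fin r → Fin 6) → ℝ by P(t) = L(∏_{i=1}^{5} θ_i^{n_i(t)} · (1 − θ₁ − ⋯ − θ₅)^{n_6(t)}), where n_i(t) is the number of indices k with t(k) = i. Then P(t) ≥ 0 for all t, ∑_t P(t) = 1, and P(t ∘ σ) = P(t) for every permutation σ ∈ Equiv.Perm (Fin r); that is, P is a well-defined exchangeable probability mass function on (Fin 6)^r. -/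

import Mathlib

open MvPolynomial

/-- The Bernstein basis polynomial of exponent vector `n`. -/
noncomputable def bernPoly (n : Fin 6 → ℕ) : MvPolynomial (Fin 5) ℝ :=
  (∏ i : Fin 5, (X i : MvPolynomial (Fin 5) ℝ) ^ n i.castSucc) *
    (1 - ∑ i : Fin 5, (X i : MvPolynomial (Fin 5) ℝ)) ^ n (Fin.last 5)

lemma totalDegree_bernstein_le (n : Fin 6 → ℕ) :
    (bernPoly n).totalDegree ≤ ∑ i, n i := by
  classical
  have hX : ∀ i : Fin 5, ((X i : MvPolynomial (Fin 5) ℝ) ^ n i.castSucc).totalDegree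
      ≤ n i.castSucc := by
    intro i
    calc ((X i : MvPolynomial (Fin 5) ℝ) ^ n i.castSucc).totalDegree
        ≤ n i.castSucc * (X i : MvPolynomial (Fin 5) ℝ).totalDegree :=
          totalDegree_pow _ _
      _ = n i.castSucc := by rw [totalDegree_X, mul_one]
  have h1 : (∏ i : Fin 5, (X i : MvPolynomial (Fin 5) ℝ) ^ n i.castSucc).totalDegree
      ≤ ∑ i : Fin 5, n i.castSucc :=
    le_trans (totalDegree_finset_prod _ _) (Finset.sum_le_sum fun i _ => hX i)
  have hsum : (∑ i : Fin 5, (X i : MvPolynomial (Fin 5) ℝ)).totalDegree ≤ 1 := by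
    refine le_trans (totalDegree_finset_sum _ _) ?_
    exact Finset.sup_le fun i _ => by rw [totalDegree_X]
  have h2 : ((1 : MvPolynomial (Fin 5) ℝ) - ∑ i : Fin 5, X i).totalDegree ≤ 1 := by
    refine le_trans (totalDegree_sub _ _) ?_
    simp only [totalDegree_one, sup_le_iff]
    exact ⟨Nat.zero_le 1, hsum⟩
  have h3 : (((1 : MvPolynomial (Fin 5) ℝ) - ∑ i : Fin 5, X i) ^ n (Fin.last 5)).totalDegree
      ≤ n (Fin.last 5) := by
    calc (((1 : MvPolynomial (Fin 5) ℝ) - ∑ i : Fin 5, X i) ^ n (Fin.last 5)).totalDegree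
        ≤ n (Fin.last 5) * ((1 : MvPolynomial (Fin 5) ℝ) - ∑ i : Fin 5, X i).totalDegree :=
          totalDegree_pow _ _
      _ ≤ n (Fin.last 5) * 1 := Nat.mul_le_mul_left _ h2
      _ = n (Fin.last 5) := mul_one _
  calc (bernPoly n).totalDegree
      ≤ (∏ i : Fin 5, (X i : MvPolynomial (Fin 5) ℝ) ^ n i.castSucc).totalDegree +
        (((1 : MvPolynomial (Fin 5) ℝ) - ∑ i : Fin 5, X i) ^ n (Fin.last 5)).totalDegree :=
        totalDegree_mul _ _
    _ ≤ (∑ i : Fin 5, n i.castSucc) + n (Fin.last 5) := Nat.add_le_add h1 h3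
    _ = ∑ i : Fin 6, n i := (Fin.sum_univ_castSucc n).symm

/-- The count vector of a sequence of `r` die rolls. -/
def countVec {r : ℕ} (t : Fin r → Fin 6) : Fin 6 → ℕ :=
  fun i => (Finset.univ.filter fun k => t k = i).card

lemma sum_countVec {r : ℕ} (t : Fin r → Fin 6) : ∑ i, countVec t i = r := by
  classical
  have := Finset.card_eq_sum_card_fiberwise
    (f := t) (s := Finset.univ) (t := Finset.univ) (fun x _ => Finset.mem_univ _)
  simpa [countVec] using this.symm

lemma bernPoly_countVec_mem {r : ℕ} (t : Fin r → Fin 6) :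
    bernPoly (countVec t) ∈ restrictTotalDegree (Fin 5) ℝ r := by
  rw [mem_restrictTotalDegree]
  calc (bernPoly (countVec t)).totalDegree ≤ ∑ i, countVec t i :=
        totalDegree_bernstein_le _
    _ = r := sum_countVec t

/-- The Bernstein cone `B_r⁺`: nonnegative combinations of degree-`r`
Bernstein basis polynomials. -/
noncomputable def bernCone (r : ℕ) : Set (MvPolynomial (Fin 5) ℝ) :=
  {g | ∃ u : (Fin 6 → ℕ) → ℝ, (∀ n, 0 ≤ u n) ∧
        g = ∑ n ∈ Finset.Nat.antidiagonalTuple 6 r, u n • bernPoly n}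


noncomputable def bFace : Fin 6 → MvPolynomial (Fin 5) ℝ :=
  Fin.snoc (fun i => X i) (1 - ∑ i : Fin 5, X i)

lemma bernPoly_eq_prod (n : Fin 6 → ℕ) : bernPoly n = ∏ i : Fin 6, bFace i ^ n i := by
  rw [Fin.prod_univ_castSucc]
  simp only [bernPoly, bFace, Fin.snoc_castSucc, Fin.snoc_last]

lemma sum_bFace : ∑ i : Fin 6, bFace i = 1 := by
  rw [Fin.sum_univ_castSucc]
  simp only [bFace, Fin.snoc_castSucc, Fin.snoc_last, add_sub_cancel]

lemma bernPoly_countVec_eq {r : ℕ} (t : Fin r → Fin 6) :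
    bernPoly (countVec t) = ∏ k : Fin r, bFace (t k) := by
  classical
  rw [bernPoly_eq_prod, ← Finset.prod_fiberwise' Finset.univ t bFace]
  refine Finset.prod_congr rfl fun j _ => ?_
  rw [Finset.prod_const, countVec]

lemma countVec_comp {r : ℕ} (σ : Equiv.Perm (Fin r)) (t : Fin r → Fin 6) :
    countVec (t ∘ σ) = countVec t := by
  classical
  funext i
  unfold countVec
  refine Finset.card_bij' (fun k _ => σ k) (fun k _ => σ.symm k) ?_ ?_ ?_ ?_ <;>
    simp [Function.comp]

lemma sum_bernPoly_countVec {r : ℕ} :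
    ∑ t : Fin r → Fin 6, bernPoly (countVec t) = 1 := by
  classical
  simp_rw [bernPoly_countVec_eq]
  have := Finset.prod_univ_sum (fun _ : Fin r => (Finset.univ : Finset (Fin 6)))
    (fun _ j => bFace j)
  rw [Fintype.piFinset_univ] at this
  rw [← this]
  simp [sum_bFace]

/-- **Quasi-expectation operators define exchangeable probabilities**
(converse part of Proposition 3): any linear functional on the polynomials of
degree at most `r` dominating the Bernstein-cone lower bound induces a
well-defined exchangeable probability mass function on `r` rolls of a
six-sided die. -/
theorem quasiExpectation_defines_exchangeable_pmf
    (r : ℕ) (hr : 1 ≤ r)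
    (L : (restrictTotalDegree (Fin 5) ℝ r) →ₗ[ℝ] ℝ)
    (hL : ∀ (g : restrictTotalDegree (Fin 5) ℝ r) (c : ℝ),
        ((g : MvPolynomial (Fin 5) ℝ) - C c) ∈ bernCone r → c ≤ L g)
    (P : (Fin r → Fin 6) → ℝ)
    (hP : ∀ t : Fin r → Fin 6,
        P t = L ⟨bernPoly (countVec t), bernPoly_countVec_mem t⟩) :
    (∀ t, 0 ≤ P t) ∧ (∑ t, P t = 1) ∧
      (∀ (σ : Equiv.Perm (Fin r)) (t : Fin r → Fin 6), P (t ∘ σ) = P t) := by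
  classical
  have one_mem : (1 : MvPolynomial (Fin 5) ℝ) ∈ restrictTotalDegree (Fin 5) ℝ r := by
    rw [mem_restrictTotalDegree, totalDegree_one]; exact Nat.zero_le r
  set oneE : restrictTotalDegree (Fin 5) ℝ r := ⟨1, one_mem⟩ with honeE
  have hzero_cone : (0 : MvPolynomial (Fin 5) ℝ) ∈ bernCone r := by
    refine ⟨fun _ => 0, fun _ => le_refl 0, ?_⟩
    simp
  have hLone_ge : (1 : ℝ) ≤ L oneE := by
    refine hL oneE 1 ?_
    simpa [honeE] using hzero_cone
  have hLone_le : L oneE ≤ 1 := by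
    have := hL (-oneE) (-1) (by simpa [honeE] using hzero_cone)
    rw [map_neg] at this
    linarith
  have hLone : L oneE = 1 := le_antisymm hLone_le hLone_ge
  refine ⟨?_, ?_, ?_⟩
  · intro t
    rw [hP]
    refine hL _ 0 ?_
    refine ⟨fun n => if n = countVec t then 1 else 0, fun n => by positivity, ?_⟩
    rw [Finset.sum_eq_single (countVec t)]
    · simp
    · intro n _ hn; simp [hn]
    · intro h
      exact absurd (Finset.Nat.mem_antidiagonalTuple.2 (sum_countVec t)) h
  · have : ∑ t : Fin r → Fin 6,
        (⟨bernPoly (countVec t), bernPoly_countVec_mem t⟩ :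
          restrictTotalDegree (Fin 5) ℝ r) = oneE := by
      apply Subtype.ext
      push_cast
      exact sum_bernPoly_countVec
    calc ∑ t, P t
        = ∑ t : Fin r → Fin 6,
            L ⟨bernPoly (countVec t), bernPoly_countVec_mem t⟩ :=
          Finset.sum_congr rfl fun t _ => hP t
      _ = L oneE := by rw [← map_sum, this]
      _ = 1 := hLone
  · intro σ t
    rw [hP, hP]
    congr 1
    apply Subtype.ext
    simp [countVec_comp]
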